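/- arXiv:1603.04650 — 3 statements merged into one kernel-verified Lean document; each statement's English description precedes it below -/
import Mathlib

section
/- If α is a normalized 3-cocycle of a finite group G with coefficients in k*, and we define α(f,g|h) = α(f,g,h)^{-1} α(f, ghg^{-1}, g) α(fg h (fg)^{-1}, f, g)^{-1}, then for all f,g,h,u in G: α(f,gh|u)·α(g,h|u) = α(fg,h|u)·α(f,g|huh^{-1}). -/
/-- The 2-cochain `α(f,g|h) = α(f,g,h)⁻¹ · α(f, ghg⁻¹, g) · α((fg)h(fg)⁻¹, f, g)⁻¹`
derived from a 3-cocycle `α`. -/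
def aux2 {G : Type*} [Group G] {k : Type*} [Field k]
    (α : G → G → G → kˣ) (f g h : G) : kˣ :=
  (α f g h)⁻¹ * α f (g * h * g⁻¹) g * (α ((f * g) * h * (f * g)⁻¹) f g)⁻¹

/-- for a normalized 3-cocycle `α` on a group `G` with values in `k*`,
the identity `α(f,gh|u)·α(g,h|u) = α(fg,h|u)·α(f,g|huh⁻¹)` holds. -/
theorem stmt0 {G : Type*} [Group G] {k : Type*} [Field k] (α : G → G → G → kˣ)
    (hcoc : ∀ f g h l : G,
      α g h l * α f (g * h) l * α f g h = α (f * g) h l * α f g (h * l))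
    (hnorm : ∀ f g h : G, f = 1 ∨ g = 1 ∨ h = 1 → α f g h = 1)
    (f g h u : G) :
    aux2 α f (g * h) u * aux2 α g h u
      = aux2 α (f * g) h u * aux2 α f g (h * u * h⁻¹) := by
  have e1 := hcoc f g h u
  have e2 := hcoc f g (h * u * h⁻¹) h
  have e3 := hcoc (f * (g * h) * u * (f * (g * h))⁻¹) f g h
  have e4 := hcoc f (g * (h * u * h⁻¹) * g⁻¹) g h
  simp only [aux2, mul_assoc, mul_inv_rev, inv_inv, inv_mul_cancel_left, mul_inv_cancel_left, inv_mul_cancel, mul_inv_cancel, mul_one, one_mul] at e1 e2 e3 e4 ⊢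
  have E1 : α f (g * h) u = (α g h u)⁻¹ * ((α (f * g) h u * α f g (h * u)) * (α f g h)⁻¹) := by
    rw [← e1]; group
  have E2 : α f g (h * (u * h⁻¹)) = (α f (g * (h * (u * h⁻¹))) h)⁻¹ *
      ((α g (h * (u * h⁻¹)) h)⁻¹ * (α (f * g) (h * (u * h⁻¹)) h * α f g (h * u))) := by
    rw [← e2]; group
  have E3 : α (f * (g * (h * (u * (h⁻¹ * (g⁻¹ * f⁻¹)))))) f (g * h) =
      (α (f * (g * (h * (u * (h⁻¹ * g⁻¹))))) g h)⁻¹ *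
        (α f g h * (α (f * (g * (h * (u * (h⁻¹ * (g⁻¹ * f⁻¹)))))) (f * g) h *
          α (f * (g * (h * (u * (h⁻¹ * (g⁻¹ * f⁻¹)))))) f g)) := by
    rw [e3]; group
  have E4 : α f (g * (h * (u * (h⁻¹ * g⁻¹)))) (g * h) =
      (α (f * (g * (h * (u * (h⁻¹ * g⁻¹))))) g h)⁻¹ *
        (α (g * (h * (u * (h⁻¹ * g⁻¹)))) g h *
          (α f (g * (h * (u * h⁻¹))) h * α f (g * (h * (u * (h⁻¹ * g⁻¹)))) g)) := by
    rw [e4]; group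
  rw [E1, E2, E3, E4, Units.ext_iff]
  push_cast
  field_simp
end

section
/- If α is a normalized 3-cocycle of a group G valued in k*, with α(f|g,h) = α(f,g,h)·α(^f g, f, h)^{-1}·α(^f g, ^f h, f) and α(f,g|h) defined as α(f,g,h)^{-1}α(f,^g h,g)α(^{fg} h,f,g)^{-1}, then α(fg|u,v)·α(f,g|u)·α(f,g|v) = α(f,g|uv)·α(g|u,v)·α(f|gug^{-1}, gvg^{-1}) for all f,g,u,v ∈ G. -/
/-- `α(f|g,h) = α(f,g,h) · α(fgf⁻¹, f, h)⁻¹ · α(fgf⁻¹, fhf⁻¹, f)`. -/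
def aux1 {G : Type*} [Group G] {k : Type*} [Field k]
    (α : G → G → G → kˣ) (f g h : G) : kˣ :=
  α f g h * (α (f * g * f⁻¹) f h)⁻¹ * α (f * g * f⁻¹) (f * h * f⁻¹) f

/-- for a normalized 3-cocycle `α` on `G` valued in `k*`,
`α(fg|u,v)·α(f,g|u)·α(f,g|v) = α(f,g|uv)·α(g|u,v)·α(f|gug⁻¹, gvg⁻¹)`. -/
theorem stmt1 {G : Type*} [Group G] {k : Type*} [Field k] (α : G → G → G → kˣ)
    (hcoc : ∀ f g h l : G,
      α g h l * α f (g * h) l * α f g h = α (f * g) h l * α f g (h * l))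
    (hnorm : ∀ f g h : G, f = 1 ∨ g = 1 ∨ h = 1 → α f g h = 1)
    (f g u v : G) :
    aux1 α (f * g) u v * aux2 α f g u * aux2 α f g v
      = aux2 α f g (u * v) * aux1 α g u v * aux1 α f (g * u * g⁻¹) (g * v * g⁻¹) := by
  have H1 := hcoc (f * (g * (u * (g⁻¹ * f⁻¹)))) f g v
  have H2 := hcoc f (g * (u * g⁻¹)) g v
  have H3 := hcoc (f * (g * (u * (g⁻¹ * f⁻¹)))) f (g * (v * g⁻¹)) g
  have H4 := hcoc f (g * (u * g⁻¹)) (g * (v * g⁻¹)) g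
  have H5 := hcoc f g u v
  have H6 := hcoc (f * (g * (u * (g⁻¹ * f⁻¹)))) (f * (g * (v * (g⁻¹ * f⁻¹)))) f g
  simp only [aux1, aux2]
  simp only [mul_assoc, mul_inv_rev, inv_inv, one_mul, mul_one, inv_mul_cancel_left,
    mul_inv_cancel_left, inv_mul_cancel, mul_inv_cancel] at H1 H2 H3 H4 H5 H6 ⊢
  have key : (α f g v * (α (f * (g * (u * (g⁻¹ * f⁻¹)))) (f * g) v * α (f * (g * (u * (g⁻¹ * f⁻¹)))) f g)) * (α (g * (u * g⁻¹)) (g * (v * g⁻¹)) g * (α f (g * (u * (v * g⁻¹))) g * α f (g * (u * g⁻¹)) (g * (v * g⁻¹)))) * (α g u v * (α f (g * u) v * α f g u)) * (α (f * (g * (v * (g⁻¹ * f⁻¹)))) f g * (α (f * (g * (u * (g⁻¹ * f⁻¹)))) (f * (g * (v * g⁻¹))) g * α (f * (g * (u * (g⁻¹ * f⁻¹)))) (f * (g * (v * (g⁻¹ * f⁻¹)))) f)) * (α (f * (g * (u * g⁻¹))) g v * α f (g * (u * g⁻¹)) (g * v)) * (α (f * (g * (u * g⁻¹))) (g * (v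 * g⁻¹)) g * α (f * (g * (u * (g⁻¹ * f⁻¹)))) f (g * v))
      = (α (f * (g * (u * g⁻¹))) g v * α (f * (g * (u * (g⁻¹ * f⁻¹)))) f (g * v)) * (α (f * (g * (u * g⁻¹))) (g * (v * g⁻¹)) g * α f (g * (u * g⁻¹)) (g * v)) * (α (f * g) u v * α f g (u * v)) * (α (f * (g * (u * (v * (g⁻¹ * f⁻¹))))) f g * α (f * (g * (u * (g⁻¹ * f⁻¹)))) (f * (g * (v * (g⁻¹ * f⁻¹)))) (f * g)) * (α (g * (u * g⁻¹)) g v * (α f (g * u) v * α f (g * (u * g⁻¹)) g)) * (α f (g * (v * g⁻¹)) g * (α (f * (g * (u * (g⁻¹ * f⁻¹)))) (f * (g * (v * g⁻¹))) g * α (f * (g * (u * (g⁻¹ * f⁻¹)))) f (g * (v * g⁻¹)))) := by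
    rw [H1, H4, H5, H6, ← H2, ← H3]
  apply mul_right_cancel (b := (α f g v * (α (f * (g * (u * (g⁻¹ * f⁻¹)))) (f * g) v * α (f * (g * (u * (g⁻¹ * f⁻¹)))) f g)) * (α (g * (u * g⁻¹)) (g * (v * g⁻¹)) g * (α f (g * (u * (v * g⁻¹))) g * α f (g * (u * g⁻¹)) (g * (v * g⁻¹)))) * (α g u v * (α f (g * u) v * α f g u)) * (α (f * (g * (v * (g⁻¹ * f⁻¹)))) f g * (α (f * (g * (u * (g⁻¹ * f⁻¹)))) (f * (g * (v * g⁻¹))) g * α (f * (g * (u * (g⁻¹ * f⁻¹)))) (f * (g * (v * (g⁻¹ * f⁻¹)))) f)) * (α (f * (g * (u * g⁻¹))) g v * α f (g * (u * g⁻¹)) (g * v)) * (α (f * (g * (u * g⁻¹))) (g * (v * g⁻¹)) g * α (f * (g * (u * (g⁻¹ * f⁻¹)))) f (g * v)))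
  conv_rhs => rw [key]
  rw [Units.ext_iff]
  push_cast
  field_simp
end

section
/- If α is a normalized 3-cocycle of a group G valued in k* and α(f|g,h) := α(f,g,h)·α(^f g,f,h)^{-1}·α(^f g,^f h,f), then α(g,h,u)·α(f|gh,u)·α(f|g,h) = α(f|g,hu)·α(f|h,u)·α(fgf^{-1}, fhf^{-1}, fuf^{-1}) for all f,g,h,u ∈ G. -/
/-- for a normalized 3-cocycle `α` on `G` valued in `k*`,
`α(g,h,u)·α(f|gh,u)·α(f|g,h) = α(f|g,hu)·α(f|h,u)·α(fgf⁻¹, fhf⁻¹, fuf⁻¹)`. -/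
theorem stmt2 {G : Type*} [Group G] {k : Type*} [Field k] (α : G → G → G → kˣ)
    (hcoc : ∀ f g h l : G,
      α g h l * α f (g * h) l * α f g h = α (f * g) h l * α f g (h * l))
    (hnorm : ∀ f g h : G, f = 1 ∨ g = 1 ∨ h = 1 → α f g h = 1)
    (f g h u : G) :
    α g h u * aux1 α f (g * h) u * aux1 α f g h
      = aux1 α f g (h * u) * aux1 α f h u
          * α (f * g * f⁻¹) (f * h * f⁻¹) (f * u * f⁻¹) := by
  have h1 := hcoc f g h u
  have h2 := hcoc (f * (g * f⁻¹)) f h u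
  have h3 := hcoc (f * (g * f⁻¹)) (f * (h * f⁻¹)) f u
  have h4 := hcoc (f * (g * f⁻¹)) (f * (h * f⁻¹)) (f * (u * f⁻¹)) f
  simp only [aux1, mul_assoc, inv_mul_cancel_left, mul_inv_cancel_left, inv_mul_cancel,
    mul_inv_cancel, one_mul, mul_one] at h1 h2 h3 h4 ⊢
  have key : (α g h u * (α f (g * h) u * ((α (f * (g * (h * f⁻¹))) f u)⁻¹ * (α (f * (g * (h * f⁻¹))) (f * (u * f⁻¹)) f * (α f g h * ((α (f * (g * f⁻¹)) f h)⁻¹ * α (f * (g * f⁻¹)) (f * (h * f⁻¹)) f)))))) * ((α (f * g) h u * α f g (h * u)) * ((α f h u * (α (f * (g * f⁻¹)) (f * h) u * α (f * (g * f⁻¹)) f h)) * ((α (f * (g * (h * f⁻¹))) f u * α (f * (g * f⁻¹)) (f * (h * f⁻¹)) (f * u)) * (α (f * (h * f⁻¹)) (f * (u * f⁻¹)) f * (α (f * (g * f⁻¹)) (f * (h * (u * f⁻¹))) f * α (f * (g * f⁻¹)) (f * (h * f⁻¹)) (f * (u * f⁻¹))))))) = (α f g (h * u) * ((α (f * (g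 * f⁻¹)) f (h * u))⁻¹ * (α (f * (g * f⁻¹)) (f * (h * (u * f⁻¹))) f * (α f h u * ((α (f * (h * f⁻¹)) f u)⁻¹ * (α (f * (h * f⁻¹)) (f * (u * f⁻¹)) f * α (f * (g * f⁻¹)) (f * (h * f⁻¹)) (f * (u * f⁻¹)))))))) * ((α g h u * (α f (g * h) u * α f g h)) * ((α (f * g) h u * α (f * (g * f⁻¹)) f (h * u)) * ((α (f * (h * f⁻¹)) f u * (α (f * (g * f⁻¹)) (f * h) u * α (f * (g * f⁻¹)) (f * (h * f⁻¹)) f)) * (α (f * (g * (h * f⁻¹))) (f * (u * f⁻¹)) f * α (f * (g * f⁻¹)) (f * (h * f⁻¹)) (f * u))))) := by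
    refine Units.ext ?_
    push_cast
    field_simp
  rw [h1, h2, h3, h4] at key
  exact mul_right_cancel key
end
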